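/- arXiv:0906.4925 — 2 statements merged into one kernel-verified Lean document; each statement's English description precedes it below -/
import Mathlib

section
/- For any two special vertices x, y in the model space 𝔸, the segment seg(x,y) = {z ∈ 𝔸 : d(x,y) = d(x,z) + d(z,y)} equals the W̄T-convex hull of {x,y}, i.e. the intersection of all special half-apartments containing x and y. -/
/-- The co-root pairing `⟨x, α^∨⟩ = 2(x,α)/(α,α)`. -/
noncomputable def coPairing {V : Type*} [NormedAddCommGroup V] [InnerProductSpace ℝ V]
    (x α : V) : ℝ := 2 * (inner ℝ x α : ℝ) / (inner ℝ α α : ℝ)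

/-- The distance `d(x,y) = Σ_{α ∈ R⁺} |⟨y − x, α^∨⟩|` on the model space. -/
noncomputable def modelDist {V : Type*} [NormedAddCommGroup V] [InnerProductSpace ℝ V]
    (Rp : Finset V) (x y : V) : ℝ := ∑ α ∈ Rp, |coPairing (y - x) α|

/-- A special half-apartment: a half-space bounded by the hyperplane `H_{α,λ}` whose
associated affine reflection lies in `W̄T`, i.e. whose translation part `(2λ/(α,α))α`
belongs to the translation group `T`. -/
def IsSpecialHalf {V : Type*} [NormedAddCommGroup V] [InnerProductSpace ℝ V]
    (Rp : Finset V) (T : AddSubgroup V) (S : Set V) : Prop :=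
  ∃ α ∈ Rp, ∃ lam : ℝ, (2 * lam / (inner ℝ α α : ℝ)) • α ∈ T ∧
    (S = {z : V | ((inner ℝ α α : ℝ) / 2) * coPairing z α ≤ lam} ∨
     S = {z : V | lam ≤ ((inner ℝ α α : ℝ) / 2) * coPairing z α})

/-- A special vertex: a point lying, for each root `α`, on a special hyperplane parallel
to `H_{α,0}`. -/
def IsSpecialVertex {V : Type*} [NormedAddCommGroup V] [InnerProductSpace ℝ V]
    (Rp : Finset V) (T : AddSubgroup V) (x : V) : Prop :=
  ∀ α ∈ Rp, (coPairing x α) • α ∈ T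


lemma real_seg (a b z : ℝ) : |b - a| = |z - a| + |b - z| ↔ min a b ≤ z ∧ z ≤ max a b := by
  rcases le_total a b with hab | hab
  · rw [min_eq_left hab, max_eq_right hab, abs_of_nonneg (sub_nonneg.mpr hab)]
    constructor
    · intro h
      have h1 : a - z ≤ |z - a| := by rw [abs_sub_comm]; exact le_abs_self _
      have h2 : z - b ≤ |b - z| := by rw [abs_sub_comm]; exact le_abs_self _
      have h3 := le_abs_self (z - a)
      have h4 := le_abs_self (b - z)
      constructor <;> linarith
    · rintro ⟨h1, h2⟩
      rw [abs_of_nonneg (by linarith), abs_of_nonneg (by linarith)]; ring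
  · rw [min_eq_right hab, max_eq_left hab, abs_of_nonpos (sub_nonpos.mpr hab)]
    constructor
    · intro h
      have h1 : a - z ≤ |z - a| := by rw [abs_sub_comm]; exact le_abs_self _
      have h2 : z - b ≤ |b - z| := by rw [abs_sub_comm]; exact le_abs_self _
      have h3 := le_abs_self (z - a)
      have h4 := le_abs_self (b - z)
      constructor <;> linarith
    · rintro ⟨h1, h2⟩
      rw [abs_of_nonpos (by linarith), abs_of_nonpos (by linarith)]; ring

lemma per_alpha {V : Type*} [NormedAddCommGroup V] [InnerProductSpace ℝ V]
    (α x y z : V) (hs : 0 < (inner ℝ α α : ℝ)) :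
    (|coPairing (y - x) α| = |coPairing (z - x) α| + |coPairing (y - z) α|) ↔
    (min (inner ℝ x α : ℝ) (inner ℝ y α) ≤ inner ℝ z α ∧
      (inner ℝ z α : ℝ) ≤ max (inner ℝ x α : ℝ) (inner ℝ y α)) := by
  have hc : (0:ℝ) < 2 / (inner ℝ α α : ℝ) := by positivity
  have hv : ∀ u v : V, coPairing (u - v) α
      = (2 / (inner ℝ α α : ℝ)) * ((inner ℝ u α : ℝ) - (inner ℝ v α : ℝ)) := by
    intro u v
    unfold coPairing
    rw [inner_sub_left]
    ring
  rw [hv, hv, hv, abs_mul, abs_mul, abs_mul, abs_of_pos hc, ← mul_add,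
    mul_right_inj' (ne_of_gt hc)]
  exact real_seg _ _ _

lemma half_pairing {V : Type*} [NormedAddCommGroup V] [InnerProductSpace ℝ V]
    (α w : V) (hs : (inner ℝ α α : ℝ) ≠ 0) :
    ((inner ℝ α α : ℝ) / 2) * coPairing w α = (inner ℝ w α : ℝ) := by
  unfold coPairing
  field_simp

/-- for special vertices `x, y` of the model space, the segment
`seg(x,y) = {z : d(x,y) = d(x,z) + d(z,y)}` equals the `W̄T`-convex hull of `{x,y}`,
the intersection of all special half-apartments containing `x` and `y`. -/
theorem stmt9 {V : Type*} [NormedAddCommGroup V] [InnerProductSpace ℝ V]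
    (Rp : Finset V) (h0 : ∀ α ∈ Rp, α ≠ 0)
    (hspan : Submodule.span ℝ (Rp : Set V) = ⊤)
    (T : AddSubgroup V) (x y : V)
    (hx : IsSpecialVertex Rp T x) (hy : IsSpecialVertex Rp T y) :
    {z : V | modelDist Rp x y = modelDist Rp x z + modelDist Rp z y} =
      ⋂₀ {S : Set V | IsSpecialHalf Rp T S ∧ x ∈ S ∧ y ∈ S} := by
  have hss : ∀ α ∈ Rp, 0 < (inner ℝ α α : ℝ) := fun α hα =>
    lt_of_le_of_ne real_inner_self_nonneg
      (Ne.symm fun h => h0 α hα (inner_self_eq_zero.mp h))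
  ext z
  simp only [Set.mem_setOf_eq, Set.mem_sInter]
  have hle : ∀ α ∈ Rp, |coPairing (y - x) α| ≤ |coPairing (z - x) α| + |coPairing (y - z) α| := by
    intro α hα
    have heq : coPairing (y - x) α = coPairing (z - x) α + coPairing (y - z) α := by
      unfold coPairing
      rw [inner_sub_left, inner_sub_left, inner_sub_left, ← add_div]
      ring_nf
    rw [heq]
    exact abs_add_le _ _
  have key : (modelDist Rp x y = modelDist Rp x z + modelDist Rp z y) ↔
      ∀ α ∈ Rp, min (inner ℝ x α : ℝ) (inner ℝ y α) ≤ inner ℝ z α ∧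
        (inner ℝ z α : ℝ) ≤ max (inner ℝ x α : ℝ) (inner ℝ y α) := by
    unfold modelDist
    rw [← Finset.sum_add_distrib, Finset.sum_eq_sum_iff_of_le hle]
    exact forall₂_congr fun α hα => per_alpha α x y z (hss α hα)
  rw [key]
  constructor
  · rintro h S ⟨⟨α, hα, lam, hT, hS | hS⟩, hxS, hyS⟩ <;>
      subst hS <;>
      simp only [Set.mem_setOf_eq, half_pairing α _ (ne_of_gt (hss α hα))] at hxS hyS ⊢
    · exact le_trans (h α hα).2 (max_le hxS hyS)
    · exact le_trans (le_min hxS hyS) (h α hα).1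
  · intro h α hα
    have hs := hss α hα
    have hsne := ne_of_gt hs
    have hcop : ∀ w : V, coPairing w α = 2 * (inner ℝ w α : ℝ) / (inner ℝ α α : ℝ) := fun w => rfl
    constructor
    · have hspec : (2 * min (inner ℝ x α : ℝ) (inner ℝ y α) / (inner ℝ α α : ℝ)) • α ∈ T := by
        rcases min_cases (inner ℝ x α : ℝ) (inner ℝ y α : ℝ) with ⟨hm, _⟩ | ⟨hm, _⟩
        · rw [hm, ← hcop]; exact hx α hα
        · rw [hm, ← hcop]; exact hy α hα
      have := h {w : V | min (inner ℝ x α : ℝ) (inner ℝ y α)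
            ≤ ((inner ℝ α α : ℝ) / 2) * coPairing w α}
        ⟨⟨α, hα, min (inner ℝ x α : ℝ) (inner ℝ y α), hspec, Or.inr rfl⟩,
          by simp only [Set.mem_setOf_eq, half_pairing α _ hsne]; exact min_le_left _ _,
          by simp only [Set.mem_setOf_eq, half_pairing α _ hsne]; exact min_le_right _ _⟩
      simpa only [Set.mem_setOf_eq, half_pairing α _ hsne] using this
    · have hspec : (2 * max (inner ℝ x α : ℝ) (inner ℝ y α) / (inner ℝ α α : ℝ)) • α ∈ T := by
        rcases max_cases (inner ℝ x α : ℝ) (inner ℝ y α : ℝ) with ⟨hm, _⟩ | ⟨hm, _⟩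
        · rw [hm, ← hcop]; exact hx α hα
        · rw [hm, ← hcop]; exact hy α hα
      have := h {w : V | ((inner ℝ α α : ℝ) / 2) * coPairing w α
            ≤ max (inner ℝ x α : ℝ) (inner ℝ y α)}
        ⟨⟨α, hα, max (inner ℝ x α : ℝ) (inner ℝ y α), hspec, Or.inl rfl⟩,
          by simp only [Set.mem_setOf_eq, half_pairing α _ hsne]; exact le_max_left _ _,
          by simp only [Set.mem_setOf_eq, half_pairing α _ hsne]; exact le_max_right _ _⟩
      simpa only [Set.mem_setOf_eq, half_pairing α _ hsne] using this
end

section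
/- In the rank-one case (Λ-tree X thick with respect to W̄T, apartment A ≅ Λ with origin 0 and x a special vertex): the image under the retraction ρ centered at the end ∂(−C_f) of the preimage r⁻¹(W̄·x) under the retraction r centered at the germ of C_f at 0 equals conv(W̄·x) ∩ (x + T), i.e. ρ(r⁻¹({x,−x})) = {y ∈ [−|x|, |x|] : y − x ∈ 2T'} for the appropriate translation subgroup. -/
/-- rank-one convexity theorem. `X` is a thick `Λ`-tree with a distinguished
apartment `A` given by an isometric embedding `e : Λ → X`; every point `z` of `X` attaches
to `A` at the point `e (μ z)` (so that `d(e t, z) = |t − μ z| + d(e (μ z), z)` for all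
`t`), the tree branches exactly at the special points (those `t` with `t + t ∈ T`, i.e.
fixed points of reflections in `W̄T`), and branches fully there. The retraction `r`
centered at the germ of the positive ray at `0` sends `z` to `±d(0,z)` according to the
initial direction of `[0,z]`, and the retraction `ρ` centered at the negative end sends
`z` to `μ z + d(e (μ z), z)`. Then for a special vertex `x`,
`ρ(r⁻¹(W̄·x)) = conv(W̄·x) ∩ (x + T) = {y ∈ [−|x|,|x|] : y − x ∈ T}`. -/
theorem stmt18 {Λ X : Type*} [AddCommGroup Λ] [LinearOrder Λ] [IsOrderedAddMonoid Λ]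
    (d : X → X → Λ)
    (hzero : ∀ a b, d a b = 0 ↔ a = b)
    (hsymm : ∀ a b, d a b = d b a)
    (htri : ∀ a b c, d a b ≤ d a c + d c b)
    -- the apartment `A = e(Λ)`
    (e : Λ → X) (hiso : ∀ s t : Λ, d (e s) (e t) = |t - s|)
    -- the attaching point `μ z` of `z` to the apartment
    (μ : X → Λ)
    (hμ : ∀ (z : X) (t : Λ), d (e t) z = |t - μ z| + d (e (μ z)) z)
    -- `Λ` is `2`-divisible (it is a module over a subfield of `ℝ`)
    (hdiv : ∀ a : Λ, ∃ b : Λ, b + b = a)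
    -- the translation group `T`; thickness: the tree branches fully at every special
    -- point, and only at special points
    (T : AddSubgroup Λ)
    (hthick : ∀ t h : Λ, t + t ∈ T → 0 < h → ∃ z : X, μ z = t ∧ d (e (μ z)) z = h)
    (hbranch : ∀ z : X, 0 < d (e (μ z)) z → μ z + μ z ∈ T)
    -- `x` is a special vertex
    (x : Λ) (hx : x + x ∈ T) :
    (fun z : X => μ z + d (e (μ z)) z) ''
        {z : X | ∃ v : Λ, (v = x ∨ v = -x) ∧
          ((0 < μ z ∧ μ z + d (e (μ z)) z = v) ∨
           (μ z ≤ 0 ∧ μ z - d (e (μ z)) z = v))} =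
      {y : Λ | -|x| ≤ y ∧ y ≤ |x| ∧ y - x ∈ T} := by
  classical
  -- distance is nonnegative
  have dnonneg : ∀ a b : X, 0 ≤ d a b := by
    intro a b
    rcases le_or_gt 0 (d a b) with h | h
    · exact h
    · exfalso
      have h1 : d a a ≤ d a b + d b a := htri a a b
      rw [(hzero a a).mpr rfl, hsymm b a] at h1
      have h2 : d a b + d a b < 0 + 0 := add_lt_add h h
      rw [add_zero] at h2
      exact absurd h1 (not_le.mpr h2)
  -- doubling is injective
  have double_inj : ∀ a b : Λ, a + a = b + b → a = b := by
    intro a b hab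
    rcases lt_trichotomy a b with h | h | h
    · exact absurd hab (ne_of_lt (add_lt_add h h))
    · exact h
    · exact absurd hab (ne_of_gt (add_lt_add h h))
  have double_pos : ∀ a : Λ, 0 < a + a → 0 < a := by
    intro a ha
    by_contra hc
    push_neg at hc
    have : a + a ≤ 0 + 0 := add_le_add hc hc
    rw [add_zero] at this
    exact absurd ha (not_lt.mpr this)
  have double_nonpos : ∀ a : Λ, a + a ≤ 0 → a ≤ 0 := by
    intro a ha
    by_contra hc
    push_neg at hc
    have : 0 + 0 < a + a := add_lt_add hc hc
    rw [add_zero] at this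
    exact absurd ha (not_le.mpr this)
  -- points of the apartment
  have hμe : ∀ t : Λ, μ (e t) = t ∧ d (e (μ (e t))) (e t) = 0 := by
    intro t
    have h1 := hμ (e t) t
    rw [(hzero (e t) (e t)).mpr rfl] at h1
    have ha : 0 ≤ |t - μ (e t)| := abs_nonneg _
    have hb : 0 ≤ d (e (μ (e t))) (e t) := dnonneg _ _
    have habs : |t - μ (e t)| = 0 := by
      have h2 : |t - μ (e t)| ≤ 0 := by
        calc |t - μ (e t)| ≤ |t - μ (e t)| + d (e (μ (e t))) (e t) :=
              le_add_of_nonneg_right hb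
          _ = 0 := h1.symm
      exact le_antisymm h2 ha
    have hd0 : d (e (μ (e t))) (e t) = 0 := by
      have h2 : d (e (μ (e t))) (e t) ≤ 0 := by
        calc d (e (μ (e t))) (e t) ≤ |t - μ (e t)| + d (e (μ (e t))) (e t) :=
              le_add_of_nonneg_left ha
          _ = 0 := h1.symm
      exact le_antisymm h2 hb
    refine ⟨?_, hd0⟩
    have := sub_eq_zero.mp (abs_eq_zero.mp habs)
    exact this.symm
  -- facts about |x|
  have hxT : x - |x| ∈ T := by
    rcases abs_choice x with h | h
    · rw [h, sub_self]; exact T.zero_mem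
    · rw [h, sub_neg_eq_add]; exact hx
  have hvmem : -|x| = x ∨ -|x| = -x := by
    rcases abs_choice x with h | h
    · right; rw [h]
    · left; rw [h, neg_neg]
  ext y
  simp only [Set.mem_image, Set.mem_setOf_eq]
  constructor
  · rintro ⟨z, ⟨v, hv, hcase⟩, rfl⟩
    set m := μ z with hm
    set h := d (e (μ z)) z with hh
    have h0 : 0 ≤ h := dnonneg _ _
    have hvlow : -|x| ≤ v := by
      rcases hv with hv' | hv' <;> rw [hv']
      · exact neg_abs_le x
      · exact neg_le_neg (le_abs_self x)
    have hvhigh : v ≤ |x| := by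
      rcases hv with hv' | hv' <;> rw [hv']
      · exact le_abs_self x
      · exact neg_le_abs x
    have hvT : v - x ∈ T := by
      rcases hv with hv' | hv' <;> rw [hv']
      · rw [sub_self]; exact T.zero_mem
      · rw [show -x - x = -(x + x) by abel]; exact T.neg_mem hx
    have hvxT : v + x ∈ T := by
      have : v + x = (v - x) + (x + x) := by abel
      rw [this]; exact T.add_mem hvT hx
    rcases hcase with ⟨hmp, heq⟩ | ⟨hmn, heq⟩
    · rw [heq]
      exact ⟨hvlow, hvhigh, hvT⟩
    · -- m ≤ 0, m - h = v, image is m + h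
      have hhv : h = m - v := by rw [← heq]; abel
      have hlow : -|x| ≤ m + h := by
        refine le_trans hvlow ?_
        rw [← heq]
        have : -h ≤ h := neg_le_self h0
        calc m - h = m + -h := by abel
          _ ≤ m + h := add_le_add_right this m
      have hhigh : m + h ≤ |x| := by
        refine le_trans ?_ (le_trans (neg_le_neg hvlow) ?_)
        · rw [hhv]
          calc m + (m - v) ≤ 0 + (0 - v) := add_le_add hmn (sub_le_sub_right hmn v)
            _ = -v := by abel
        · rw [neg_neg]
      refine ⟨hlow, hhigh, ?_⟩
      rcases h0.eq_or_lt with h0' | h0'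
      · have : m + h = v := by rw [← h0', add_zero, ← heq, ← h0', sub_zero]
        rw [this]; exact hvT
      · have h2m : m + m ∈ T := hbranch z h0'
        have : m + h - x = (m + m) - (v + x) := by rw [hhv]; abel
        rw [this]
        exact T.sub_mem h2m hvxT
  · rintro ⟨hy1, hy2, hyT⟩
    rcases hy1.eq_or_lt with hyeq | hylt
    · -- y = -|x| : take z = e y
      refine ⟨e y, ⟨-|x|, hvmem, Or.inr ⟨?_, ?_⟩⟩, ?_⟩
      · rw [(hμe y).1, ← hyeq]
        exact neg_nonpos.mpr (abs_nonneg x)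
      · rw [(hμe y).2, (hμe y).1, sub_zero, ← hyeq]
      · show μ (e y) + d (e (μ (e y))) (e y) = y
        rw [(hμe y).2, (hμe y).1, add_zero]
    · -- -|x| < y : branch off at b = (y - |x|)/2 with height c = (y + |x|)/2
      obtain ⟨b, hb⟩ := hdiv (y - |x|)
      obtain ⟨c, hc⟩ := hdiv (y + |x|)
      have hcpos : 0 < c := by
        refine double_pos c ?_
        rw [hc]
        have := add_lt_add_left hylt |x|
        rwa [neg_add_cancel] at this
      have hbnp : b ≤ 0 := by
        refine double_nonpos b ?_
        rw [hb]
        exact sub_nonpos.mpr hy2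
      have hbT : b + b ∈ T := by
        rw [hb, show y - |x| = (y - x) + (x - |x|) by abel]
        exact T.add_mem hyT hxT
      obtain ⟨z, hz1, hz2⟩ := hthick b c hbT hcpos
      have hbc1 : b + c = y := by
        refine double_inj _ _ ?_
        rw [show b + c + (b + c) = (b + b) + (c + c) by abel, hb, hc]
        abel
      have hbc2 : b - c = -|x| := by
        refine double_inj _ _ ?_
        rw [show b - c + (b - c) = (b + b) - (c + c) by abel, hb, hc]
        abel
      refine ⟨z, ⟨-|x|, hvmem, Or.inr ⟨?_, ?_⟩⟩, ?_⟩
      · rw [hz1]; exact hbnp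
      · rw [hz2, hz1]; exact hbc2
      · show μ z + d (e (μ z)) z = y
        rw [hz2, hz1]; exact hbc1
end
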